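/- Up to isomorphism there is exactly one 2-injective 3-factor subdirect product of D₄ × D₄ × D₄ that is not a rotate-or-reflect group, namely the double CFI group: every 2-injective 3-factor subdirect product Γ ≤ D₄ × D₄ × D₄ that is not a rotate-or-reflect group is isomorphic (as a group) to the subgroup Δ = ⟨(1,α,α), (α,1,α), (ρ,ρ,β)⟩ of D₄ × D₄ × D₄. -/

import Mathlib

/-- `Γ ≤ G₁ × G₂ × G₃` is a (3-factor) subdirect product:
the projection to each factor is surjective on `Γ`. -/
def IsSubdirect3 {G₁ G₂ G₃ : Type*} [Group G₁] [Group G₂] [Group G₃]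
    (Γ : Subgroup (G₁ × G₂ × G₃)) : Prop :=
  (∀ x : G₁, ∃ g ∈ Γ, g.1 = x) ∧ (∀ x : G₂, ∃ g ∈ Γ, g.2.1 = x) ∧
    (∀ x : G₃, ∃ g ∈ Γ, g.2.2 = x)

/-- `Γ ≤ G₁ × G₂ × G₃` is 2-injective: for each `i`, the projection of `Γ` onto
the product of the two factors other than `Gᵢ` is injective on `Γ`. -/
def IsTwoInjective3 {G₁ G₂ G₃ : Type*} [Group G₁] [Group G₂] [Group G₃]
    (Γ : Subgroup (G₁ × G₂ × G₃)) : Prop :=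
  (∀ g ∈ Γ, ∀ h ∈ Γ, g.2.1 = h.2.1 → g.2.2 = h.2.2 → g = h) ∧
  (∀ g ∈ Γ, ∀ h ∈ Γ, g.1 = h.1 → g.2.2 = h.2.2 → g = h) ∧
  (∀ g ∈ Γ, ∀ h ∈ Γ, g.1 = h.1 → g.2.1 = h.2.1 → g = h)

open DihedralGroup in
/-- An element of `Dₙ` is a rotation if it lies in the cyclic subgroup of
rotations `{r i}`; the identity counts as a rotation. -/
def IsRotation {n : ℕ} (x : DihedralGroup n) : Prop := ∃ i, x = r i

open DihedralGroup in
/-- An element of `Dₙ` is a reflection if it is of the form `sr i`. -/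
def IsReflection {n : ℕ} (x : DihedralGroup n) : Prop := ∃ i, x = sr i

/-- A subgroup of a product of three dihedral groups is a rotate-or-reflect group if every
element is either a rotation in all components or a reflection in all components. -/
def IsRotateOrReflect3 {n₁ n₂ n₃ : ℕ}
    (Γ : Subgroup (DihedralGroup n₁ × DihedralGroup n₂ × DihedralGroup n₃)) : Prop :=
  ∀ g ∈ Γ, (IsRotation g.1 ∧ IsRotation g.2.1 ∧ IsRotation g.2.2) ∨
    (IsReflection g.1 ∧ IsReflection g.2.1 ∧ IsReflection g.2.2)

/-- A subgroup of a product of two dihedral groups is a rotate-or-reflect group if every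
element is either a rotation in both components or a reflection in both components. -/
def IsRotateOrReflect2 {n₁ n₂ : ℕ}
    (Γ : Subgroup (DihedralGroup n₁ × DihedralGroup n₂)) : Prop :=
  ∀ g ∈ Γ, (IsRotation g.1 ∧ IsRotation g.2) ∨ (IsReflection g.1 ∧ IsReflection g.2)

open DihedralGroup in
/-- The double CFI group `Δ = ⟨(1,α,α), (α,1,α), (ρ,ρ,β)⟩ ≤ D₄ × D₄ × D₄`, where
`ρ = r 1` is a rotation of order 4, `α = sr 0` and `α' = sr 2` are the two reflections
with `α * α' = ρ²`, and `β = sr 1 ∉ {α, α'}` is a reflection. -/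
def doubleCFI : Subgroup (DihedralGroup 4 × DihedralGroup 4 × DihedralGroup 4) :=
  Subgroup.closure {(1, sr 0, sr 0), (sr 0, 1, sr 0), (r 1, r 1, sr 1)}

namespace CFIProof
open DihedralGroup

abbrev D4 := DihedralGroup 4
abbrev G3 := D4 × D4 × D4

@[simp] lemma r_inv4 (i : ZMod 4) : (r i : D4)⁻¹ = r (-i) := rfl
@[simp] lemma sr_inv4 (i : ZMod 4) : (sr i : D4)⁻¹ = sr i := rfl

/-- The automorphism of `D₄` given by `r i ↦ r (w*i)`, `sr i ↦ sr (w*i + k)`,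
for `w` with `w * w = 1`. -/
def dihAut (w k : ZMod 4) (hw : w * w = 1) : D4 ≃* D4 where
  toFun := fun x => match x with
    | .r i => r (w * i)
    | .sr i => sr (w * i + k)
  invFun := fun x => match x with
    | .r i => r (w * i)
    | .sr i => sr (w * i - w * k)
  left_inv := by
    rintro (i | i) <;> simp only
    · rw [show w * (w * i) = (w * w) * i by ring, hw, one_mul]
    · rw [show w * (w * i + k) - w * k = (w * w) * i by ring, hw, one_mul]
  right_inv := by
    rintro (i | i) <;> simp only
    · rw [show w * (w * i) = (w * w) * i by ring, hw, one_mul]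
    · have h2 : w * (w * i - w * k) + k = i := by
        have h3 : w * (w * i - w * k) + k = (w*w) * i - (w*w)*k + k := by ring
        rw [h3, hw, one_mul, one_mul]; ring
      rw [h2]
  map_mul' := by
    rintro (i | i) (j | j) <;>
      simp only [r_mul_r, r_mul_sr, sr_mul_r, sr_mul_sr] <;> congr 1 <;> ring

@[simp] lemma dihAut_r (w k : ZMod 4) (hw : w * w = 1) (i : ZMod 4) :
    dihAut w k hw (r i) = r (w * i) := rfl
@[simp] lemma dihAut_sr (w k : ZMod 4) (hw : w * w = 1) (i : ZMod 4) :
    dihAut w k hw (sr i) = sr (w * i + k) := rfl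

/-- swap coordinates 2 and 3 -/
def swap23 : G3 ≃* G3 where
  toFun p := (p.1, p.2.2, p.2.1)
  invFun p := (p.1, p.2.2, p.2.1)
  left_inv _ := rfl
  right_inv _ := rfl
  map_mul' _ _ := rfl

/-- swap coordinates 1 and 3 -/
def swap13 : G3 ≃* G3 where
  toFun p := (p.2.2, p.2.1, p.1)
  invFun p := (p.2.2, p.2.1, p.1)
  left_inv _ := rfl
  right_inv _ := rfl
  map_mul' _ _ := rfl

lemma tri_apply (e1 e2 e3 : D4 ≃* D4) (a b c : D4) :
    ((e1.prodCongr (e2.prodCongr e3)).toMonoidHom (a, b, c) : G3) = (e1 a, e2 b, e3 c) := rfl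

lemma transport (Γ : Subgroup G3) (e : G3 ≃* G3)
    (h : Nonempty ((Γ.map e.toMonoidHom) ≃* doubleCFI)) : Nonempty (Γ ≃* doubleCFI) :=
  h.elim fun f => ⟨(e.subgroupMap Γ).trans f⟩

lemma mem_map_equiv {Γ : Subgroup G3} {e : G3 ≃* G3} {x : G3} :
    x ∈ Γ.map e.toMonoidHom ↔ e.symm x ∈ Γ := Subgroup.mem_map_equiv


section Main

variable {Γ : Subgroup CFIProof.G3}

lemma inj23 (h2 : IsTwoInjective3 Γ) {a b c a' : D4} (h : (a,b,c) ∈ Γ) (h' : (a',b,c) ∈ Γ) :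
    a = a' := congrArg Prod.fst (h2.1 _ h _ h' rfl rfl)

lemma inj13 (h2 : IsTwoInjective3 Γ) {a b c b' : D4} (h : (a,b,c) ∈ Γ) (h' : (a,b',c) ∈ Γ) :
    b = b' := congrArg (fun p => p.2.1) (h2.2.1 _ h _ h' rfl rfl)

lemma inj12 (h2 : IsTwoInjective3 Γ) {a b c c' : D4} (h : (a,b,c) ∈ Γ) (h' : (a,b,c') ∈ Γ) :
    c = c' := congrArg (fun p => p.2.2) (h2.2.2 _ h _ h' rfl rfl)

lemma ax1 (h2 : IsTwoInjective3 Γ) {a : D4} (h : (a,(1:D4),(1:D4)) ∈ Γ) : a = 1 :=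
  inj23 h2 h Γ.one_mem

lemma ax2 (h2 : IsTwoInjective3 Γ) {b : D4} (h : ((1:D4),b,(1:D4)) ∈ Γ) : b = 1 :=
  inj13 h2 Γ.one_mem h |>.symm

lemma ax3 (h2 : IsTwoInjective3 Γ) {c : D4} (h : ((1:D4),(1:D4),c) ∈ Γ) : c = 1 :=
  inj12 h2 Γ.one_mem h |>.symm

lemma central_conj : ∀ (x g : D4), (g = 1 ∨ g = r 2) → x * g * x⁻¹ = g := by decide

lemma sq_central : ∀ g : D4, (g = 1 ∨ g = r 2) → g * g = 1 := by decide

lemma triple_mul (a b c a' b' c' : D4) :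
    ((a,b,c) * (a',b',c') : G3) = (a*a', b*b', c*c') := rfl

lemma triple_inv (a b c : D4) : ((a,b,c)⁻¹ : G3) = (a⁻¹, b⁻¹, c⁻¹) := rfl

lemma cen3 (hsd : IsSubdirect3 Γ) (h2 : IsTwoInjective3 Γ) {a b c : D4}
    (ha : a = 1 ∨ a = r 2) (hb : b = 1 ∨ b = r 2) (h : (a,b,c) ∈ Γ) : c = 1 ∨ c = r 2 := by
  obtain ⟨⟨w1, w2, w3⟩, hw, hw3⟩ := hsd.2.2 (r 1)
  simp only at hw3
  subst hw3
  have hc := Γ.mul_mem (Γ.mul_mem hw h) (Γ.inv_mem hw)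
  rw [triple_mul, triple_inv, triple_mul, central_conj w1 a ha, central_conj w2 b hb] at hc
  have hconj : r 1 * c * (r 1)⁻¹ = c := inj12 h2 hc h
  have hsq := Γ.mul_mem h h
  rw [triple_mul, sq_central a ha, sq_central b hb] at hsq
  have hcc : c * c = 1 := ax3 h2 hsq
  exact (by decide : ∀ c : D4, r 1 * c * (r 1)⁻¹ = c → c * c = 1 → c = 1 ∨ c = r 2) c hconj hcc

lemma cen2 (hsd : IsSubdirect3 Γ) (h2 : IsTwoInjective3 Γ) {a b c : D4}
    (ha : a = 1 ∨ a = r 2) (hc : c = 1 ∨ c = r 2) (h : (a,b,c) ∈ Γ) : b = 1 ∨ b = r 2 := by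
  obtain ⟨⟨w1, w2, w3⟩, hw, hw2⟩ := hsd.2.1 (r 1)
  simp only at hw2
  subst hw2
  have hm := Γ.mul_mem (Γ.mul_mem hw h) (Γ.inv_mem hw)
  rw [triple_mul, triple_inv, triple_mul, central_conj w1 a ha, central_conj w3 c hc] at hm
  have hconj : r 1 * b * (r 1)⁻¹ = b := inj13 h2 hm h
  have hsq := Γ.mul_mem h h
  rw [triple_mul, sq_central a ha, sq_central c hc] at hsq
  have hbb : b * b = 1 := ax2 h2 hsq
  exact (by decide : ∀ b : D4, r 1 * b * (r 1)⁻¹ = b → b * b = 1 → b = 1 ∨ b = r 2) b hconj hbb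

lemma cen1 (hsd : IsSubdirect3 Γ) (h2 : IsTwoInjective3 Γ) {a b c : D4}
    (hb : b = 1 ∨ b = r 2) (hc : c = 1 ∨ c = r 2) (h : (a,b,c) ∈ Γ) : a = 1 ∨ a = r 2 := by
  obtain ⟨⟨w1, w2, w3⟩, hw, hw1⟩ := hsd.1 (r 1)
  simp only at hw1
  subst hw1
  have hm := Γ.mul_mem (Γ.mul_mem hw h) (Γ.inv_mem hw)
  rw [triple_mul, triple_inv, triple_mul, central_conj w2 b hb, central_conj w3 c hc] at hm
  have hconj : r 1 * a * (r 1)⁻¹ = a := inj23 h2 hm h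
  have hsq := Γ.mul_mem h h
  rw [triple_mul, sq_central b hb, sq_central c hc] at hsq
  have haa : a * a = 1 := ax1 h2 hsq
  exact (by decide : ∀ a : D4, r 1 * a * (r 1)⁻¹ = a → a * a = 1 → a = 1 ∨ a = r 2) a hconj haa

lemma l1a (hsd : IsSubdirect3 Γ) (h2 : IsTwoInjective3 Γ) {c : D4}
    (h : ((1:D4), r 2, c) ∈ Γ) : c = r 2 := by
  rcases cen3 hsd h2 (Or.inl rfl) (Or.inr rfl) h with h1 | h1
  · subst h1; exact absurd (ax2 h2 h) (by decide)
  · exact h1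

lemma l1b (hsd : IsSubdirect3 Γ) (h2 : IsTwoInjective3 Γ) {c : D4}
    (h : (r 2, (1:D4), c) ∈ Γ) : c = r 2 := by
  rcases cen3 hsd h2 (Or.inr rfl) (Or.inl rfl) h with h1 | h1
  · subst h1; exact absurd (ax1 h2 h) (by decide)
  · exact h1

lemma l2a (hsd : IsSubdirect3 Γ) (h2 : IsTwoInjective3 Γ) {b : D4}
    (h : (r 2, b, (1:D4)) ∈ Γ) : b = r 2 := by
  rcases cen2 hsd h2 (Or.inr rfl) (Or.inl rfl) h with h1 | h1
  · subst h1; exact absurd (ax1 h2 h) (by decide)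
  · exact h1

end Main


section Conj

variable {Γ : Subgroup CFIProof.G3}

lemma commC_eq (x y z i j k : ZMod 4) :
    ((r x, r y, sr z) * (r i, r j, r k) * (r x, r y, sr z)⁻¹ * (r i, r j, r k)⁻¹ : G3)
      = (1, 1, r (-(k+k))) := by
  simp only [triple_inv, r_inv4, sr_inv4, triple_mul, r_mul_r, r_mul_sr, sr_mul_r, sr_mul_sr,
    Prod.mk.injEq, one_def, r.injEq, sr.injEq]
  refine ⟨?_, ?_, ?_⟩ <;> ring

lemma commA_eq (w p q i j k : ZMod 4) :
    ((r w, sr p, sr q) * (r i, r j, r k) * (r w, sr p, sr q)⁻¹ * (r i, r j, r k)⁻¹ : G3)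
      = (1, r (-(j+j)), r (-(k+k))) := by
  simp only [triple_inv, r_inv4, sr_inv4, triple_mul, r_mul_r, r_mul_sr, sr_mul_r, sr_mul_sr,
    Prod.mk.injEq, one_def, r.injEq, sr.injEq]
  refine ⟨?_, ?_, ?_⟩ <;> ring

lemma commB_eq (u f v i j k : ZMod 4) :
    ((sr u, r f, sr v) * (r i, r j, r k) * (sr u, r f, sr v)⁻¹ * (r i, r j, r k)⁻¹ : G3)
      = (r (-(i+i)), 1, r (-(k+k))) := by
  simp only [triple_inv, r_inv4, sr_inv4, triple_mul, r_mul_r, r_mul_sr, sr_mul_r, sr_mul_sr,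
    Prod.mk.injEq, one_def, r.injEq, sr.injEq]
  refine ⟨?_, ?_, ?_⟩ <;> ring

lemma conjC (h2 : IsTwoInjective3 Γ) {x y z i j k : ZMod 4}
    (hC : (r x, r y, sr z) ∈ Γ) (hγ : (r i, r j, r k) ∈ Γ) : k + k = 0 := by
  have hm := Γ.mul_mem (Γ.mul_mem (Γ.mul_mem hC hγ) (Γ.inv_mem hC)) (Γ.inv_mem hγ)
  rw [commC_eq] at hm
  have h0 : r (-(k+k)) = (1 : D4) := ax3 h2 hm
  rw [one_def, r.injEq] at h0
  linear_combination -h0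

lemma conjA (h2 : IsTwoInjective3 Γ) {w p q i j k : ZMod 4}
    (hA : (r w, sr p, sr q) ∈ Γ) (hγ : (r i, r j, r k) ∈ Γ) (hk : k + k = 0) : j + j = 0 := by
  have hm := Γ.mul_mem (Γ.mul_mem (Γ.mul_mem hA hγ) (Γ.inv_mem hA)) (Γ.inv_mem hγ)
  rw [commA_eq] at hm
  rw [show -(k+k) = 0 by rw [hk]; ring, show (r 0 : D4) = 1 from one_def.symm] at hm
  have h0 : r (-(j+j)) = (1 : D4) := ax2 h2 hm
  rw [one_def, r.injEq] at h0
  linear_combination -h0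

lemma conjB (h2 : IsTwoInjective3 Γ) {u f v i j k : ZMod 4}
    (hB : (sr u, r f, sr v) ∈ Γ) (hγ : (r i, r j, r k) ∈ Γ) (hk : k + k = 0) : i + i = 0 := by
  have hm := Γ.mul_mem (Γ.mul_mem (Γ.mul_mem hB hγ) (Γ.inv_mem hB)) (Γ.inv_mem hγ)
  rw [commB_eq] at hm
  rw [show -(k+k) = 0 by rw [hk]; ring, show (r 0 : D4) = 1 from one_def.symm] at hm
  have h0 : r (-(i+i)) = (1 : D4) := ax1 h2 hm
  rw [one_def, r.injEq] at h0
  linear_combination -h0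

/-- every all-rotation element of Γ lies in the Klein group V -/
lemma rotV (h2 : IsTwoInjective3 Γ) {x y z w p q u v i j k : ZMod 4}
    (hC : (r x, r y, sr z) ∈ Γ) (hA : (r w, sr p, sr q) ∈ Γ) (hB : (sr u, r 0, sr v) ∈ Γ)
    (hV1 : ((1:D4), r 2, r 2) ∈ Γ) (hγ : (r i, r j, r k) ∈ Γ) :
    ((r i, r j, r k) : G3) = 1 ∨ ((r i, r j, r k) : G3) = (1, r 2, r 2) ∨
      ((r i, r j, r k) : G3) = (r 2, 1, r 2) ∨ ((r i, r j, r k) : G3) = (r 2, r 2, 1) := by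
  have hk : k + k = 0 := conjC h2 hC hγ
  have hj : j + j = 0 := conjA h2 hA hγ hk
  have hi : i + i = 0 := conjB h2 hB hγ hk
  have e2 : ∀ m : ZMod 4, m + m = 0 → m = 0 ∨ m = 2 := by decide
  rcases e2 i hi with hi' | hi' <;> rcases e2 j hj with hj' | hj' <;>
    rcases e2 k hk with hk' | hk' <;> subst hi' <;> subst hj' <;> subst hk'
  · exact Or.inl rfl
  · exact absurd (ax3 h2 (by simpa only [one_def] using hγ)) (by decide)
  · exact absurd (ax2 h2 (by simpa only [one_def] using hγ)) (by decide)
  · exact Or.inr (Or.inl (by rw [one_def]))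
  · exact absurd (ax1 h2 (by simpa only [one_def] using hγ)) (by decide)
  · exact Or.inr (Or.inr (Or.inl (by rw [one_def])))
  · exact Or.inr (Or.inr (Or.inr (by rw [one_def])))
  · exact absurd (inj23 h2 hγ hV1) (by decide)

end Conj


section Get

variable {Γ : Subgroup CFIProof.G3}

lemma commCA_eq (x y z w s t : ZMod 4) :
    ((r x, r y, sr z) * (r w, sr s, sr t) * (r x, r y, sr z)⁻¹ * (r w, sr s, sr t)⁻¹ : G3)
      = (1, r (y+y), r (t+t-(z+z))) := by
  simp only [triple_inv, r_inv4, sr_inv4, triple_mul, r_mul_r, r_mul_sr, sr_mul_r, sr_mul_sr,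
    Prod.mk.injEq, one_def, r.injEq, sr.injEq]
  refine ⟨?_, ?_, ?_⟩ <;> ring

lemma commCB_eq (x y z u f v : ZMod 4) :
    ((r x, r y, sr z) * (sr u, r f, sr v) * (r x, r y, sr z)⁻¹ * (sr u, r f, sr v)⁻¹ : G3)
      = (r (x+x), 1, r (v+v-(z+z))) := by
  simp only [triple_inv, r_inv4, sr_inv4, triple_mul, r_mul_r, r_mul_sr, sr_mul_r, sr_mul_sr,
    Prod.mk.injEq, one_def, r.injEq, sr.injEq]
  refine ⟨?_, ?_, ?_⟩ <;> ring

lemma oneR2R2 (hsd : IsSubdirect3 Γ) (h2 : IsTwoInjective3 Γ) {x y z w s t : ZMod 4}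
    (hC : (r x, r y, sr z) ∈ Γ) (hA : (r w, sr s, sr t) ∈ Γ) (hy : y + y = 2) :
    ((1:D4), r 2, r 2) ∈ Γ ∧ t + t - (z + z) = 2 := by
  have hm := Γ.mul_mem (Γ.mul_mem (Γ.mul_mem hC hA) (Γ.inv_mem hC)) (Γ.inv_mem hA)
  rw [commCA_eq, hy] at hm
  have hr : r (t+t-(z+z)) = r 2 := l1a hsd h2 hm
  rw [r.injEq] at hr
  rw [hr] at hm
  exact ⟨hm, hr⟩

lemma r2OneR2 (hsd : IsSubdirect3 Γ) (h2 : IsTwoInjective3 Γ) {x y z u f v : ZMod 4}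
    (hC : (r x, r y, sr z) ∈ Γ) (hB : (sr u, r f, sr v) ∈ Γ) (hx : x + x = 2) :
    (r 2, (1:D4), r 2) ∈ Γ ∧ v + v - (z + z) = 2 := by
  have hm := Γ.mul_mem (Γ.mul_mem (Γ.mul_mem hC hB) (Γ.inv_mem hC)) (Γ.inv_mem hB)
  rw [commCB_eq, hx] at hm
  have hr : r (v+v-(z+z)) = r 2 := l1b hsd h2 hm
  rw [r.injEq] at hr
  rw [hr] at hm
  exact ⟨hm, hr⟩

lemma get (hsd : IsSubdirect3 Γ) (h2 : IsTwoInjective3 Γ) {x y z : ZMod 4}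
    (hC : (r x, r y, sr z) ∈ Γ) :
    (∃ a b c, (r a, sr b, sr c) ∈ Γ) ∧ (∃ a b c, (sr a, r b, sr c) ∈ Γ) := by
  obtain ⟨⟨c1, c2, c3⟩, hγ, he⟩ := hsd.2.2 (r 1)
  simp only at he
  subst he
  rcases c1 with i | i <;> rcases c2 with j | j
  · -- (r i, r j, r 1) : impossible
    exact absurd (conjC h2 hC hγ) (by decide)
  · -- (r i, sr j, r 1) : type 010
    have hm011 : (r (x+i), sr (j-y), sr (z+1)) ∈ Γ := by
      have := Γ.mul_mem hC hγ
      simpa only [triple_mul, r_mul_r, r_mul_sr, sr_mul_r, sr_mul_sr] using this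
    refine ⟨⟨_, _, _, hm011⟩, ?_⟩
    obtain ⟨⟨d1, d2, d3⟩, hh, hd⟩ := hsd.1 (sr 0)
    simp only at hd
    subst hd
    rcases d2 with b | b <;> rcases d3 with c | c
    · have hprod := Γ.mul_mem hh hC
      exact ⟨_, _, _, by simpa only [triple_mul, r_mul_r, r_mul_sr, sr_mul_r, sr_mul_sr] using hprod⟩
    · exact ⟨_, _, _, hh⟩
    · have hprod := Γ.mul_mem hh hm011
      exact ⟨_, _, _, by simpa only [triple_mul, r_mul_r, r_mul_sr, sr_mul_r, sr_mul_sr] using hprod⟩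
    · have hprod := Γ.mul_mem hh hγ
      exact ⟨_, _, _, by simpa only [triple_mul, r_mul_r, r_mul_sr, sr_mul_r, sr_mul_sr] using hprod⟩
  · -- (sr i, r j, r 1) : type 100
    have hm101 : (sr (i+x), r (j+y), sr (z-1)) ∈ Γ := by
      have := Γ.mul_mem hγ hC
      simpa only [triple_mul, r_mul_r, r_mul_sr, sr_mul_r, sr_mul_sr] using this
    refine ⟨?_, ⟨_, _, _, hm101⟩⟩
    obtain ⟨⟨d1, d2, d3⟩, hk2, hd⟩ := hsd.2.1 (sr 0)
    simp only at hd
    subst hd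
    rcases d1 with b | b <;> rcases d3 with c | c
    · have hprod := Γ.mul_mem hk2 hC
      exact ⟨_, _, _, by simpa only [triple_mul, r_mul_r, r_mul_sr, sr_mul_r, sr_mul_sr] using hprod⟩
    · exact ⟨_, _, _, hk2⟩
    · have hprod := Γ.mul_mem hk2 hm101
      exact ⟨_, _, _, by simpa only [triple_mul, r_mul_r, r_mul_sr, sr_mul_r, sr_mul_sr] using hprod⟩
    · have hprod := Γ.mul_mem hk2 hγ
      exact ⟨_, _, _, by simpa only [triple_mul, r_mul_r, r_mul_sr, sr_mul_r, sr_mul_sr] using hprod⟩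
  · -- (sr i, sr j, r 1) : impossible
    have hm := Γ.mul_mem hγ hγ
    have heq : ((sr i, sr j, r 1) * (sr i, sr j, r 1) : G3) = ((1:D4), 1, r 2) := by
      simp only [triple_mul, sr_mul_sr, r_mul_r, Prod.mk.injEq, one_def, r.injEq]
      refine ⟨?_, ?_, ?_⟩ <;> first | ring | decide
    rw [heq] at hm
    exact absurd (ax3 h2 hm) (by decide)

end Get


section MainLemma

lemma odd_sq : ∀ m : ZMod 4, m + m = 2 → m * m = 1 := by decide
lemma even_opts : ∀ m : ZMod 4, m + m = 0 → m = 0 ∨ m = 2 := by decide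
lemma parity_opts : ∀ m : ZMod 4, m + m = 0 ∨ m + m = 2 := by decide
lemma odd_of_even : ∀ m : ZMod 4, m + m = 0 → (r m : D4) = 1 ∨ (r m : D4) = r 2 := by decide

lemma main (Γ : Subgroup CFIProof.G3) (hsd : IsSubdirect3 Γ) (h2 : IsTwoInjective3 Γ)
    {x y z : ZMod 4} (hC : (r x, r y, sr z) ∈ Γ) : Nonempty (Γ ≃* doubleCFI) := by
  have h4 : (4 : ZMod 4) = 0 := by decide
  -- x and y are odd
  have hsqC : (r (x+x), r (y+y), (1:D4)) ∈ Γ := by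
    have := Γ.mul_mem hC hC
    simpa only [triple_mul, r_mul_r, sr_mul_sr, sub_self, one_def] using this
  have hx2 : x + x = 2 := by
    rcases parity_opts x with h0 | hok
    · exfalso
      rw [h0, show (r (0:ZMod 4) : D4) = 1 from one_def.symm] at hsqC
      have hy0 : y + y = 0 := by
        have hh := ax2 h2 hsqC
        rw [one_def, r.injEq] at hh
        exact hh
      rcases cen3 hsd h2 (odd_of_even x h0) (odd_of_even y hy0) hC with h | h <;>
        simp [one_def, -r_zero] at h
    · exact hok
  have hy2 : y + y = 2 := by
    rw [hx2] at hsqC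
    have hh := l2a hsd h2 hsqC
    rwa [r.injEq] at hh
  -- elements of type (0,1,1) and (1,0,1)
  obtain ⟨⟨w, s, t, hA'⟩, ⟨u, f, v0, hB'⟩⟩ := get hsd h2 hC
  -- the Klein four group V
  obtain ⟨hV1, hrel_t⟩ := oneR2R2 hsd h2 hC hA' hy2
  obtain ⟨hV2, hrel_v⟩ := r2OneR2 hsd h2 hC hB' hx2
  have hV3 : (r 2, r 2, (1:D4)) ∈ Γ := by
    have := Γ.mul_mem hV1 hV2
    simpa only [triple_mul, one_mul, mul_one, r_mul_r, zero_add, add_zero, show (2:ZMod 4)+2 = 0 by decide,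
      one_def] using this
  -- normalize A
  have hw0 : w + w = 0 := by
    have hsq := Γ.mul_mem hA' hA'
    have heq : ((r w, sr s, sr t) * (r w, sr s, sr t) : G3) = (r (w+w), (1:D4), 1) := by
      simp only [triple_mul, r_mul_r, sr_mul_sr, sub_self, one_def]
    rw [heq] at hsq
    have hh := ax1 h2 hsq
    rw [one_def, r.injEq] at hh
    exact hh
  obtain ⟨p, hA⟩ : ∃ p, ((r 0 : D4), sr p, sr t) ∈ Γ := by
    rcases even_opts w hw0 with h0 | h2'
    · subst h0; exact ⟨s, hA'⟩
    · subst h2'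
      have := Γ.mul_mem hV3 hA'
      refine ⟨s - 2, ?_⟩
      simpa only [triple_mul, r_mul_r, r_mul_sr, one_mul,
        show (2:ZMod 4)+2 = 0 by decide] using this
  -- normalize B
  have hf0 : f + f = 0 := by
    have hsq := Γ.mul_mem hB' hB'
    have heq : ((sr u, r f, sr v0) * (sr u, r f, sr v0) : G3) = ((1:D4), r (f+f), 1) := by
      simp only [triple_mul, r_mul_r, sr_mul_sr, sub_self, one_def]
    rw [heq] at hsq
    have hh := ax2 h2 hsq
    rw [one_def, r.injEq] at hh
    exact hh
  obtain ⟨u', hB⟩ : ∃ u', ((sr u' : D4), r 0, sr v0) ∈ Γ := by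
    rcases even_opts f hf0 with h0 | h2'
    · subst h0; exact ⟨u, hB'⟩
    · subst h2'
      have := Γ.mul_mem hV3 hB'
      refine ⟨u - 2, ?_⟩
      simpa only [triple_mul, r_mul_r, r_mul_sr, one_mul,
        show (2:ZMod 4)+2 = 0 by decide] using this
  clear hA' hB' hsqC hw0 hf0
  -- the closure subgroup
  set S : Set G3 := {((r 0 : D4), sr p, sr t), ((sr u' : D4), r 0, sr v0), (r x, r y, sr z)}
    with hS
  set H : Subgroup CFIProof.G3 := Subgroup.closure S with hHdef
  have hAH : ((r 0 : D4), sr p, sr t) ∈ H := Subgroup.subset_closure (by simp [hS])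
  have hBH : ((sr u' : D4), r 0, sr v0) ∈ H := Subgroup.subset_closure (by simp [hS])
  have hCH : ((r x : D4), r y, sr z) ∈ H := Subgroup.subset_closure (by simp [hS])
  have hHle : H ≤ Γ := by
    rw [hHdef, Subgroup.closure_le]
    rintro g hg
    simp only [hS, Set.mem_insert_iff, Set.mem_singleton_iff] at hg
    rcases hg with rfl | rfl | rfl
    · exact hA
    · exact hB
    · exact hC
  have hV1H : ((1:D4), r 2, r 2) ∈ H := by
    have hm := H.mul_mem (H.mul_mem (H.mul_mem hCH hAH) (H.inv_mem hCH)) (H.inv_mem hAH)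
    rw [commCA_eq, hy2, hrel_t] at hm
    exact hm
  have hV2H : (r 2, (1:D4), r 2) ∈ H := by
    have hm := H.mul_mem (H.mul_mem (H.mul_mem hCH hBH) (H.inv_mem hCH)) (H.inv_mem hBH)
    rw [commCB_eq, hx2, hrel_v] at hm
    exact hm
  have hV3H : (r 2, r 2, (1:D4)) ∈ H := by
    have := H.mul_mem hV1H hV2H
    simpa only [triple_mul, one_mul, mul_one, r_mul_r, zero_add, add_zero, show (2:ZMod 4)+2 = 0 by decide,
      one_def] using this
  -- Γ = H
  have hΓle : Γ ≤ H := by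
    intro g hg
    obtain ⟨g1, g2, g3⟩ := g
    have step : ∀ W : G3, W ∈ Γ → W ∈ H →
        (∃ i j k, ((g1, g2, g3) * W⁻¹ : G3) = (r i, r j, r k)) → ((g1, g2, g3) : G3) ∈ H := by
      rintro W hWΓ hWH ⟨i, j, k, heq⟩
      have hm : ((r i, r j, r k) : G3) ∈ Γ := heq ▸ Γ.mul_mem hg (Γ.inv_mem hWΓ)
      have hV := rotV h2 hC hA hB hV1 hm
      have hgW : ((g1, g2, g3) : G3) = ((r i, r j, r k) : G3) * W := by
        rw [← heq, inv_mul_cancel_right]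
      rw [hgW]
      rcases hV with h | h | h | h <;> rw [h]
      · exact H.mul_mem H.one_mem hWH
      · exact H.mul_mem hV1H hWH
      · exact H.mul_mem hV2H hWH
      · exact H.mul_mem hV3H hWH
    -- auxiliary products
    have hACΓ : ((r x : D4), sr (p + y), r (z - t)) ∈ Γ := by
      have := Γ.mul_mem hA hC
      simpa only [triple_mul, r_mul_r, sr_mul_r, sr_mul_sr, zero_add] using this
    have hACH : ((r x : D4), sr (p + y), r (z - t)) ∈ H := by
      have := H.mul_mem hAH hCH
      simpa only [triple_mul, r_mul_r, sr_mul_r, sr_mul_sr, zero_add] using this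
    have hBCΓ : ((sr (u' + x) : D4), r y, r (z - v0)) ∈ Γ := by
      have := Γ.mul_mem hB hC
      simpa only [triple_mul, r_mul_r, sr_mul_r, sr_mul_sr, r_mul_sr, zero_add] using this
    have hBCH : ((sr (u' + x) : D4), r y, r (z - v0)) ∈ H := by
      have := H.mul_mem hBH hCH
      simpa only [triple_mul, r_mul_r, sr_mul_r, sr_mul_sr, r_mul_sr, zero_add] using this
    have hABΓ : ((sr u' : D4), sr p, r (v0 - t)) ∈ Γ := by
      have := Γ.mul_mem hA hB
      simpa only [triple_mul, r_mul_sr, sr_mul_r, sr_mul_sr, zero_add, add_zero, sub_zero] using this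
    have hABH : ((sr u' : D4), sr p, r (v0 - t)) ∈ H := by
      have := H.mul_mem hAH hBH
      simpa only [triple_mul, r_mul_sr, sr_mul_r, sr_mul_sr, zero_add, add_zero, sub_zero] using this
    have hABCΓ : ((sr (u' + x) : D4), sr (p + y), sr (z - (v0 - t))) ∈ Γ := by
      have := Γ.mul_mem hABΓ hC
      simpa only [triple_mul, sr_mul_r, r_mul_sr] using this
    have hABCH : ((sr (u' + x) : D4), sr (p + y), sr (z - (v0 - t))) ∈ H := by
      have := H.mul_mem hABH hCH
      simpa only [triple_mul, sr_mul_r, r_mul_sr] using this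
    rcases g1 with a | a <;> rcases g2 with b | b <;> rcases g3 with c | c
    · exact step 1 Γ.one_mem H.one_mem ⟨a, b, c, by rw [inv_one, mul_one]⟩
    · exact step _ hC hCH ⟨a + -x, b + -y, z - c,
        by simp only [triple_inv, r_inv4, sr_inv4, triple_mul, r_mul_r, sr_mul_sr]⟩
    · exact step _ hACΓ hACH ⟨a + -x, (p + y) - b, c + -(z - t),
        by simp only [triple_inv, r_inv4, sr_inv4, triple_mul, r_mul_r, sr_mul_sr]⟩
    · exact step _ hA hAH ⟨a + -(0:ZMod 4), p - b, t - c,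
        by simp only [triple_inv, r_inv4, sr_inv4, triple_mul, r_mul_r, sr_mul_sr]⟩
    · exact step _ hBCΓ hBCH ⟨(u' + x) - a, b + -y, c + -(z - v0),
        by simp only [triple_inv, r_inv4, sr_inv4, triple_mul, r_mul_r, sr_mul_sr]⟩
    · exact step _ hB hBH ⟨u' - a, b + -(0:ZMod 4), v0 - c,
        by simp only [triple_inv, r_inv4, sr_inv4, triple_mul, r_mul_r, sr_mul_sr]⟩
    · exact step _ hABΓ hABH ⟨u' - a, p - b, c + -(v0 - t),
        by simp only [triple_inv, r_inv4, sr_inv4, triple_mul, r_mul_r, sr_mul_sr]⟩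
    · exact step _ hABCΓ hABCH ⟨(u' + x) - a, (p + y) - b, (z - (v0 - t)) - c,
        by simp only [triple_inv, r_inv4, sr_inv4, triple_mul, r_mul_r, sr_mul_sr]⟩
  have hEq : Γ = H := le_antisymm hΓle hHle
  -- build the isomorphism
  have hxx : x * x = 1 := odd_sq x hx2
  have hyy : y * y = 1 := odd_sq y hy2
  have hzt : (z - t) + (z - t) = 2 := by linear_combination - hrel_t - h4
  have hw3 : (z - t) * (z - t) = 1 := odd_sq _ hzt
  have hd0 : (v0 - t) + (v0 - t) = 0 := by linear_combination hrel_v - hrel_t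
  rcases even_opts _ hd0 with hvt | hvt
  · -- v0 = t case
    set ψ : CFIProof.G3 ≃* CFIProof.G3 :=
      (dihAut x (-(x*u')) hxx).prodCongr
        ((dihAut y (-(y*p)) hyy).prodCongr (dihAut (z-t) (-((z-t)*t)) hw3)) with hψ
    have e1 : ψ.toMonoidHom ((r 0 : D4), sr p, sr t) = ((1:D4), sr 0, sr 0) := by
      rw [hψ, tri_apply]
      simp only [dihAut_r, dihAut_sr, Prod.mk.injEq, one_def, r.injEq, sr.injEq]
      refine ⟨by ring, by ring, by ring⟩
    have e2 : ψ.toMonoidHom ((sr u' : D4), r 0, sr v0) = ((sr 0 : D4), 1, sr 0) := by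
      rw [hψ, tri_apply]
      simp only [dihAut_r, dihAut_sr, Prod.mk.injEq, one_def, r.injEq, sr.injEq]
      refine ⟨by ring, by ring, by linear_combination (z - t) * hvt⟩
    have e3 : ψ.toMonoidHom ((r x : D4), r y, sr z) = ((r 1 : D4), r 1, sr 1) := by
      rw [hψ, tri_apply]
      simp only [dihAut_r, dihAut_sr, Prod.mk.injEq, one_def, r.injEq, sr.injEq]
      refine ⟨hxx, hyy, by linear_combination hw3⟩
    have hmap : Γ.map ψ.toMonoidHom = doubleCFI := by
      rw [hEq, hHdef, MonoidHom.map_closure, hS, Set.image_insert_eq, Set.image_insert_eq,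
        Set.image_singleton, e1, e2, e3]
      rfl
    exact ⟨(ψ.subgroupMap Γ).trans (MulEquiv.subgroupCongr hmap)⟩
  · -- v0 - t = 2 case
    have h33 : (3*(z-t)) * (3*(z-t)) = 1 := by linear_combination 9 * hw3 + 2 * h4
    set ψ : CFIProof.G3 ≃* CFIProof.G3 :=
      (dihAut x (-(x*u')) hxx).prodCongr
        ((dihAut y (-(y*p) + 2) hyy).prodCongr
          (dihAut (3*(z-t)) (-(3*((z-t)*t)) + 2) h33)) with hψ
    have e1 : ψ.toMonoidHom ((r 0 : D4), sr p, sr t) = ((1:D4), sr 2, sr 2) := by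
      rw [hψ, tri_apply]
      simp only [dihAut_r, dihAut_sr, Prod.mk.injEq, one_def, r.injEq, sr.injEq]
      refine ⟨by ring, by ring, by ring⟩
    have e2 : ψ.toMonoidHom ((sr u' : D4), r 0, sr v0) = ((sr 0 : D4), 1, sr 0) := by
      rw [hψ, tri_apply]
      simp only [dihAut_r, dihAut_sr, Prod.mk.injEq, one_def, r.injEq, sr.injEq]
      refine ⟨by ring, by ring, by linear_combination 3*(z-t)*hvt + 3*hzt + 2*h4⟩
    have e3 : ψ.toMonoidHom ((r x : D4), r y, sr z) = ((r 1 : D4), r 1, sr 1) := by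
      rw [hψ, tri_apply]
      simp only [dihAut_r, dihAut_sr, Prod.mk.injEq, one_def, r.injEq, sr.injEq]
      refine ⟨hxx, hyy, by linear_combination 3*hw3 + h4⟩
    have hcl : Subgroup.closure ({((1:D4), sr 2, sr 2), ((sr 0 : D4), 1, sr 0),
        ((r 1 : D4), r 1, sr 1)} : Set CFIProof.G3) = doubleCFI := by
      apply le_antisymm
      · rw [Subgroup.closure_le]
        rintro g hg
        simp only [Set.mem_insert_iff, Set.mem_singleton_iff] at hg
        rcases hg with rfl | rfl | rfl
        · have hc : ((r 1 : D4), r 1, sr 1) ∈ doubleCFI := Subgroup.subset_closure (by simp)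
          have ha : ((1:D4), sr 0, sr 0) ∈ doubleCFI := Subgroup.subset_closure (by simp)
          have key : (((1:D4), sr 2, sr 2) : CFIProof.G3) =
              (((r 1 : D4), r 1, sr 1) : CFIProof.G3) * (((1:D4), sr 0, sr 0) : CFIProof.G3) *
                ((((r 1 : D4), r 1, sr 1) : CFIProof.G3))⁻¹ := by
            decide
          rw [key]
          exact mul_mem (mul_mem hc ha) (inv_mem hc)
        · exact Subgroup.subset_closure (by simp)
        · exact Subgroup.subset_closure (by simp)
      · rw [doubleCFI, Subgroup.closure_le]
        rintro g hg
        simp only [Set.mem_insert_iff, Set.mem_singleton_iff] at hg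
        have hc : ((r 1 : D4), r 1, sr 1) ∈ Subgroup.closure ({((1:D4), sr 2, sr 2),
            ((sr 0 : D4), 1, sr 0), ((r 1 : D4), r 1, sr 1)} : Set CFIProof.G3) :=
          Subgroup.subset_closure (by simp)
        have ha' : ((1:D4), sr 2, sr 2) ∈ Subgroup.closure ({((1:D4), sr 2, sr 2),
            ((sr 0 : D4), 1, sr 0), ((r 1 : D4), r 1, sr 1)} : Set CFIProof.G3) :=
          Subgroup.subset_closure (by simp)
        rcases hg with rfl | rfl | rfl
        · have key : (((1:D4), sr 0, sr 0) : CFIProof.G3) =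
              ((((r 1 : D4), r 1, sr 1) : CFIProof.G3))⁻¹ * (((1:D4), sr 2, sr 2) : CFIProof.G3) *
                (((r 1 : D4), r 1, sr 1) : CFIProof.G3) := by
            decide
          rw [key]
          exact mul_mem (mul_mem (inv_mem hc) ha') hc
        · exact Subgroup.subset_closure (by simp)
        · exact hc
    have hmap : Γ.map ψ.toMonoidHom = doubleCFI := by
      rw [hEq, hHdef, MonoidHom.map_closure, hS, Set.image_insert_eq, Set.image_insert_eq,
        Set.image_singleton, e1, e2, e3, hcl]
    exact ⟨(ψ.subgroupMap Γ).trans (MulEquiv.subgroupCongr hmap)⟩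

end MainLemma


section Transport

variable {Γ : Subgroup CFIProof.G3}

lemma hsd_swap23 (hsd : IsSubdirect3 Γ) : IsSubdirect3 (Γ.map swap23.toMonoidHom) := by
  refine ⟨fun a => ?_, fun a => ?_, fun a => ?_⟩
  · obtain ⟨g, hg, he⟩ := hsd.1 a
    exact ⟨swap23.toMonoidHom g, Subgroup.mem_map_of_mem _ hg, he⟩
  · obtain ⟨g, hg, he⟩ := hsd.2.2 a
    exact ⟨swap23.toMonoidHom g, Subgroup.mem_map_of_mem _ hg, he⟩
  · obtain ⟨g, hg, he⟩ := hsd.2.1 a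
    exact ⟨swap23.toMonoidHom g, Subgroup.mem_map_of_mem _ hg, he⟩

lemma hsd_swap13 (hsd : IsSubdirect3 Γ) : IsSubdirect3 (Γ.map swap13.toMonoidHom) := by
  refine ⟨fun a => ?_, fun a => ?_, fun a => ?_⟩
  · obtain ⟨g, hg, he⟩ := hsd.2.2 a
    exact ⟨swap13.toMonoidHom g, Subgroup.mem_map_of_mem _ hg, he⟩
  · obtain ⟨g, hg, he⟩ := hsd.2.1 a
    exact ⟨swap13.toMonoidHom g, Subgroup.mem_map_of_mem _ hg, he⟩
  · obtain ⟨g, hg, he⟩ := hsd.1 a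
    exact ⟨swap13.toMonoidHom g, Subgroup.mem_map_of_mem _ hg, he⟩

lemma h2inj_swap23 (h2 : IsTwoInjective3 Γ) : IsTwoInjective3 (Γ.map swap23.toMonoidHom) := by
  refine ⟨?_, ?_, ?_⟩ <;>
    rintro g' hg' h' hh' e1 e2 <;>
    obtain ⟨g, hg, rfl⟩ := Subgroup.mem_map.mp hg' <;>
    obtain ⟨h, hh, rfl⟩ := Subgroup.mem_map.mp hh'
  · exact congrArg _ (h2.1 g hg h hh e2 e1)
  · exact congrArg _ (h2.2.2 g hg h hh e1 e2)
  · exact congrArg _ (h2.2.1 g hg h hh e1 e2)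

lemma h2inj_swap13 (h2 : IsTwoInjective3 Γ) : IsTwoInjective3 (Γ.map swap13.toMonoidHom) := by
  refine ⟨?_, ?_, ?_⟩ <;>
    rintro g' hg' h' hh' e1 e2 <;>
    obtain ⟨g, hg, rfl⟩ := Subgroup.mem_map.mp hg' <;>
    obtain ⟨h, hh, rfl⟩ := Subgroup.mem_map.mp hh'
  · exact congrArg _ (h2.2.2 g hg h hh e2 e1)
  · exact congrArg _ (h2.2.1 g hg h hh e2 e1)
  · exact congrArg _ (h2.1 g hg h hh e2 e1)

end Transport

end CFIProof

theorem statement_6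
    (Γ : Subgroup (DihedralGroup 4 × DihedralGroup 4 × DihedralGroup 4))
    (hsd : IsSubdirect3 Γ) (h2inj : IsTwoInjective3 Γ)
    (hnot : ¬ IsRotateOrReflect3 Γ) :
    Nonempty (Γ ≃* doubleCFI) := by
  open CFIProof DihedralGroup in
  rw [IsRotateOrReflect3] at hnot
  push_neg at hnot
  obtain ⟨g, hg, hmix⟩ := hnot
  obtain ⟨g1, g2, g3⟩ := g
  rcases g1 with i | i <;> rcases g2 with j | j <;> rcases g3 with k | k
  · exact ((hmix.1 ⟨i, rfl⟩ ⟨j, rfl⟩) ⟨k, rfl⟩).elim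
  · exact main Γ hsd h2inj hg
  · exact transport Γ swap23
      (main _ (hsd_swap23 hsd) (h2inj_swap23 h2inj)
        (show ((r i : D4), r k, sr j) ∈ _ from Subgroup.mem_map.mpr ⟨_, hg, rfl⟩))
  · -- (r i, sr j, sr k) : type (0,1,1)
    have hii : i + i = 0 := by
      have hsq := Γ.mul_mem hg hg
      have heq : ((r i, sr j, sr k) * (r i, sr j, sr k) : CFIProof.G3)
          = (r (i+i), (1:D4), 1) := by
        simp only [triple_mul, r_mul_r, sr_mul_sr, sub_self, one_def]
      rw [heq] at hsq
      have hh := ax1 h2inj hsq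
      rw [one_def, r.injEq] at hh
      exact hh
    obtain ⟨⟨c1, c2, c3⟩, hγ, he⟩ := hsd.1 (r 1)
    simp only at he
    subst he
    rcases c2 with b | b <;> rcases c3 with c | c
    · -- (r 1, r b, r c)
      have hm := Γ.mul_mem hg hγ
      have hsq := Γ.mul_mem hm hm
      have heq : ((((r i, sr j, sr k) : CFIProof.G3) * (r 1, r b, r c)) *
          (((r i, sr j, sr k) : CFIProof.G3) * (r 1, r b, r c)) : CFIProof.G3)
          = (r ((i+1)+(i+1)), (1:D4), 1) := by
        simp only [triple_mul, r_mul_r, sr_mul_r, sr_mul_sr, sub_self, one_def]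
      rw [heq] at hsq
      have hh := ax1 h2inj hsq
      rw [one_def, r.injEq] at hh
      have h20 : (2 : ZMod 4) = 0 := by linear_combination hh - hii
      exact absurd h20 (by decide)
    · exact main Γ hsd h2inj hγ
    · exact transport Γ swap23
        (main _ (hsd_swap23 hsd) (h2inj_swap23 h2inj)
          (show ((r 1 : D4), r c, sr b) ∈ _ from Subgroup.mem_map.mpr ⟨_, hγ, rfl⟩))
    · have hsq := Γ.mul_mem hγ hγ
      have heq : ((r 1, sr b, sr c) * (r 1, sr b, sr c) : CFIProof.G3)
          = (r 2, (1:D4), 1) := by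
        simp only [triple_mul, r_mul_r, sr_mul_sr, sub_self, one_def, Prod.mk.injEq, r.injEq]
        decide
      rw [heq] at hsq
      have hh : (r 2 : D4) = 1 := by
        have h1 := inj23 h2inj hsq (show ((1:D4),(1:D4),(1:D4)) ∈ Γ from Γ.one_mem)
        exact h1
      exact absurd hh (by decide)
  · exact transport Γ swap13
      (main _ (hsd_swap13 hsd) (h2inj_swap13 h2inj)
        (show ((r k : D4), r j, sr i) ∈ _ from Subgroup.mem_map.mpr ⟨_, hg, rfl⟩))
  · -- (sr i, r j, sr k) : type (1,0,1)
    have hjj : j + j = 0 := by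
      have hsq := Γ.mul_mem hg hg
      have heq : ((sr i, r j, sr k) * (sr i, r j, sr k) : CFIProof.G3)
          = ((1:D4), r (j+j), 1) := by
        simp only [triple_mul, r_mul_r, sr_mul_sr, sub_self, one_def]
      rw [heq] at hsq
      have hh := ax2 h2inj hsq
      rw [one_def, r.injEq] at hh
      exact hh
    obtain ⟨⟨c1, c2, c3⟩, hγ, he⟩ := hsd.2.1 (r 1)
    simp only at he
    subst he
    rcases c1 with b | b <;> rcases c3 with c | c
    · -- (r b, r 1, r c)
      have hm := Γ.mul_mem hg hγ
      have hsq := Γ.mul_mem hm hm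
      have heq : ((((sr i, r j, sr k) : CFIProof.G3) * (r b, r 1, r c)) *
          (((sr i, r j, sr k) : CFIProof.G3) * (r b, r 1, r c)) : CFIProof.G3)
          = ((1:D4), r ((j+1)+(j+1)), 1) := by
        simp only [triple_mul, r_mul_r, sr_mul_r, sr_mul_sr, sub_self, one_def]
      rw [heq] at hsq
      have hh := ax2 h2inj hsq
      rw [one_def, r.injEq] at hh
      have h20 : (2 : ZMod 4) = 0 := by linear_combination hh - hjj
      exact absurd h20 (by decide)
    · exact main Γ hsd h2inj hγ
    · exact transport Γ swap13
        (main _ (hsd_swap13 hsd) (h2inj_swap13 h2inj)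
          (show ((r c : D4), r 1, sr b) ∈ _ from Subgroup.mem_map.mpr ⟨_, hγ, rfl⟩))
    · have hsq := Γ.mul_mem hγ hγ
      have heq : ((sr b, r 1, sr c) * (sr b, r 1, sr c) : CFIProof.G3)
          = ((1:D4), r 2, 1) := by
        simp only [triple_mul, r_mul_r, sr_mul_sr, sub_self, one_def, Prod.mk.injEq, r.injEq]
        decide
      rw [heq] at hsq
      exact absurd (ax2 h2inj hsq) (by decide)
  · -- (sr i, sr j, r k) : type (1,1,0)
    have hkk : k + k = 0 := by
      have hsq := Γ.mul_mem hg hg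
      have heq : ((sr i, sr j, r k) * (sr i, sr j, r k) : CFIProof.G3)
          = ((1:D4), (1:D4), r (k+k)) := by
        simp only [triple_mul, r_mul_r, sr_mul_sr, sub_self, one_def]
      rw [heq] at hsq
      have hh := ax3 h2inj hsq
      rw [one_def, r.injEq] at hh
      exact hh
    obtain ⟨⟨c1, c2, c3⟩, hγ, he⟩ := hsd.2.2 (r 1)
    simp only at he
    subst he
    rcases c1 with b | b <;> rcases c2 with c | c
    · -- (r b, r c, r 1)
      have hm := Γ.mul_mem hg hγ
      have hsq := Γ.mul_mem hm hm
      have heq : ((((sr i, sr j, r k) : CFIProof.G3) * (r b, r c, r 1)) *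
          (((sr i, sr j, r k) : CFIProof.G3) * (r b, r c, r 1)) : CFIProof.G3)
          = ((1:D4), (1:D4), r ((k+1)+(k+1))) := by
        simp only [triple_mul, r_mul_r, sr_mul_r, sr_mul_sr, sub_self, one_def]
      rw [heq] at hsq
      have hh := ax3 h2inj hsq
      rw [one_def, r.injEq] at hh
      have h20 : (2 : ZMod 4) = 0 := by linear_combination hh - hkk
      exact absurd h20 (by decide)
    · exact transport Γ swap23
        (main _ (hsd_swap23 hsd) (h2inj_swap23 h2inj)
          (show ((r b : D4), r 1, sr c) ∈ _ from Subgroup.mem_map.mpr ⟨_, hγ, rfl⟩))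
    · exact transport Γ swap13
        (main _ (hsd_swap13 hsd) (h2inj_swap13 h2inj)
          (show ((r 1 : D4), r c, sr b) ∈ _ from Subgroup.mem_map.mpr ⟨_, hγ, rfl⟩))
    · have hsq := Γ.mul_mem hγ hγ
      have heq : ((sr b, sr c, r 1) * (sr b, sr c, r 1) : CFIProof.G3)
          = ((1:D4), (1:D4), r 2) := by
        simp only [triple_mul, r_mul_r, sr_mul_sr, sub_self, one_def, Prod.mk.injEq, r.injEq]
        decide
      rw [heq] at hsq
      exact absurd (ax3 h2inj hsq) (by decide)
  · exact ((hmix.2 ⟨i, rfl⟩ ⟨j, rfl⟩) ⟨k, rfl⟩).elim
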